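/- Let k, L be natural numbers with 1 ≤ L ≤ k and let π : {0, 1, ..., k} → ℝ satisfy π(i) ≥ 0 for all i and Σ_{i=0}^{k} π(i) = 1. Define π'(0) = Σ_{i=0}^{k−L} π(i) · C(k − L, i) / C(k, i) and, for 1 ≤ i ≤ L, ρ(i) = Σ_{j = i}^{i + k − L} π(j) · C(L, i) · C(k − L, j − i) / ((1 − π'(0)) · C(k, j)), where C(n, m) denotes the binomial coefficient (with C(n, m) = 0 when m > n). If π'(0) < 1, then ρ(i) ≥ 0 for all 1 ≤ i ≤ L and Σ_{i=1}^{L} ρ(i) = 1. -/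

import Mathlib

open Finset

/-- Vandermonde restricted to the box `[0,L] × [0,k-L]`. -/
lemma vand_box (k L j : ℕ) (hLk : L ≤ k) :
    ∑ p ∈ (Finset.range (L+1) ×ˢ Finset.range (k-L+1)).filter (fun p => p.1 + p.2 = j),
      Nat.choose L p.1 * Nat.choose (k-L) p.2 = Nat.choose k j := by
  conv_rhs => rw [show k = L + (k - L) by omega]
  rw [Nat.add_choose_eq]
  apply Finset.sum_subset
  · intro p hp
    simp only [Finset.mem_filter] at hp
    simpa [Finset.mem_antidiagonal] using hp.2
  · intro p hp hnp
    rw [Finset.HasAntidiagonal.mem_antidiagonal] at hp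
    simp only [Finset.mem_filter, Finset.mem_product, Finset.mem_range, not_and, not_lt] at hnp
    by_cases h1 : p.1 < L + 1
    · by_cases h2 : p.2 < k - L + 1
      · exact absurd hp (hnp ⟨h1, h2⟩)
      · have : k - L < p.2 := by omega
        simp [Nat.choose_eq_zero_of_lt this]
    · have : L < p.1 := by omega
      simp [Nat.choose_eq_zero_of_lt this]

/-- **Corollary (Feedback Based Adaptive Degree Distribution).**
Let `1 ≤ L ≤ k` and let `π : {0,...,k} → ℝ` be a probability mass function
(`π(i) ≥ 0`, `∑_{i=0}^{k} π(i) = 1`).  With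
`π'(0) = ∑_{i=0}^{k−L} π(i) · C(k − L, i) / C(k, i)` and, for `1 ≤ i ≤ L`,
`ρ(i) = ∑_{j=i}^{i+k−L} π(j) · C(L, i) · C(k − L, j − i) / ((1 − π'(0)) · C(k, j))`:
if `π'(0) < 1`, then `ρ(i) ≥ 0` for all `1 ≤ i ≤ L` and `∑_{i=1}^{L} ρ(i) = 1`,
so `ρ` is a probability distribution on the degrees `1, ..., L`. -/
theorem stmt_11 (k L : ℕ) (hL1 : 1 ≤ L) (hLk : L ≤ k) (π : ℕ → ℝ)
    (hnn : ∀ i ≤ k, 0 ≤ π i)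
    (hsum : ∑ i ∈ Finset.range (k + 1), π i = 1)
    (π'0 : ℝ)
    (hπ'0 : π'0 = ∑ i ∈ Finset.range (k - L + 1),
        π i * ((Nat.choose (k - L) i : ℕ) : ℝ) / ((Nat.choose k i : ℕ) : ℝ))
    (hlt : π'0 < 1)
    (ρ : ℕ → ℝ)
    (hρ : ∀ i, ρ i = ∑ j ∈ Finset.Icc i (i + k - L),
        π j * ((Nat.choose L i * Nat.choose (k - L) (j - i) : ℕ) : ℝ)
          / ((1 - π'0) * ((Nat.choose k j : ℕ) : ℝ))) :
    (∀ i, 1 ≤ i → i ≤ L → 0 ≤ ρ i) ∧ ∑ i ∈ Finset.Icc 1 L, ρ i = 1 := by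
  have hpos : (0:ℝ) < 1 - π'0 := by linarith
  constructor
  · -- nonnegativity
    intro i hi1 hiL
    rw [hρ i]
    apply Finset.sum_nonneg
    intro j hj
    rw [Finset.mem_Icc] at hj
    have hjk : j ≤ k := by omega
    apply div_nonneg
    · exact mul_nonneg (hnn j hjk) (Nat.cast_nonneg _)
    · exact mul_nonneg hpos.le (Nat.cast_nonneg _)
  · -- the sum
    set S : ℕ → ℝ := fun i => ∑ d ∈ Finset.range (k-L+1),
        π (i+d) * ((Nat.choose L i * Nat.choose (k-L) d : ℕ) : ℝ)
          / ((Nat.choose k (i+d) : ℕ) : ℝ) with hS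
    -- ρ i = S i / (1 - π'0)
    have hρS : ∀ i, ρ i = S i / (1 - π'0) := by
      intro i
      rw [hρ i, hS]
      have h1 : i + k - L = i + (k - L) := by omega
      rw [h1, show Finset.Icc i (i + (k-L)) = Finset.Ico i (i + (k-L) + 1) by
        rw [Finset.Ico_add_one_right_eq_Icc], Finset.sum_Ico_eq_sum_range]
      simp only [show i + (k-L) + 1 - i = k - L + 1 by omega]
      rw [Finset.sum_div]
      apply Finset.sum_congr rfl
      intro d _
      rw [Nat.add_sub_cancel_left]
      rw [div_mul_eq_div_div_swap]
    -- S 0 = π'0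
    have hS0 : S 0 = π'0 := by
      rw [hS, hπ'0]
      apply Finset.sum_congr rfl
      intro d _
      simp [Nat.choose_zero_right]
    -- total sum of S over range (L+1) is 1
    have htot : ∑ i ∈ Finset.range (L+1), S i = 1 := by
      have hmaps : ∀ p ∈ Finset.range (L+1) ×ˢ Finset.range (k-L+1),
          p.1 + p.2 ∈ Finset.range (k+1) := by
        intro p hp
        rw [Finset.mem_product, Finset.mem_range, Finset.mem_range] at hp
        rw [Finset.mem_range]
        omega
      calc ∑ i ∈ Finset.range (L+1), S i
          = ∑ p ∈ Finset.range (L+1) ×ˢ Finset.range (k-L+1),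
              π (p.1+p.2) * ((Nat.choose L p.1 * Nat.choose (k-L) p.2 : ℕ) : ℝ)
                / ((Nat.choose k (p.1+p.2) : ℕ) : ℝ) := by
            rw [Finset.sum_product]
        _ = ∑ j ∈ Finset.range (k+1),
              ∑ p ∈ (Finset.range (L+1) ×ˢ Finset.range (k-L+1)).filter
                  (fun p => p.1 + p.2 = j),
                π (p.1+p.2) * ((Nat.choose L p.1 * Nat.choose (k-L) p.2 : ℕ) : ℝ)
                  / ((Nat.choose k (p.1+p.2) : ℕ) : ℝ) := by
            rw [Finset.sum_fiberwise_of_maps_to hmaps]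
        _ = ∑ j ∈ Finset.range (k+1), π j := by
            apply Finset.sum_congr rfl
            intro j hj
            rw [Finset.mem_range] at hj
            have hjk : j ≤ k := by omega
            have hck : (0:ℝ) < ((Nat.choose k j : ℕ) : ℝ) := by
              exact_mod_cast Nat.choose_pos hjk
            calc ∑ p ∈ (Finset.range (L+1) ×ˢ Finset.range (k-L+1)).filter
                  (fun p => p.1 + p.2 = j),
                  π (p.1+p.2) * ((Nat.choose L p.1 * Nat.choose (k-L) p.2 : ℕ) : ℝ)
                    / ((Nat.choose k (p.1+p.2) : ℕ) : ℝ)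
                = ∑ p ∈ (Finset.range (L+1) ×ˢ Finset.range (k-L+1)).filter
                    (fun p => p.1 + p.2 = j),
                    π j / ((Nat.choose k j : ℕ) : ℝ)
                      * ((Nat.choose L p.1 * Nat.choose (k-L) p.2 : ℕ) : ℝ) := by
                  apply Finset.sum_congr rfl
                  intro p hp
                  rw [Finset.mem_filter] at hp
                  rw [hp.2]
                  ring
              _ = π j / ((Nat.choose k j : ℕ) : ℝ)
                    * ((∑ p ∈ (Finset.range (L+1) ×ˢ Finset.range (k-L+1)).filter
                        (fun p => p.1 + p.2 = j),
                        Nat.choose L p.1 * Nat.choose (k-L) p.2 : ℕ) : ℝ) := by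
                  rw [← Finset.mul_sum, Nat.cast_sum]
              _ = π j := by
                  rw [vand_box k L j hLk]
                  field_simp
        _ = 1 := hsum
    -- split off the i = 0 term
    have hsplit : ∑ i ∈ Finset.Icc 1 L, S i = 1 - π'0 := by
      have h1 : ∑ i ∈ Finset.Icc 1 L, S i = ∑ i ∈ Finset.range L, S (i+1) := by
        rw [show Finset.Icc 1 L = Finset.Ico 1 (L+1) by rw [Finset.Ico_add_one_right_eq_Icc],
          Finset.sum_Ico_eq_sum_range]
        simp only [show L + 1 - 1 = L by omega]
        apply Finset.sum_congr rfl
        intro i _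
        rw [add_comm]
      rw [h1]
      have := Finset.sum_range_succ' S L
      rw [htot] at this
      rw [hS0] at this
      linarith
    calc ∑ i ∈ Finset.Icc 1 L, ρ i
        = ∑ i ∈ Finset.Icc 1 L, S i / (1 - π'0) := by
          apply Finset.sum_congr rfl; intro i _; exact hρS i
      _ = (∑ i ∈ Finset.Icc 1 L, S i) / (1 - π'0) := by rw [Finset.sum_div]
      _ = 1 := by rw [hsplit]; exact div_self (ne_of_gt hpos)
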